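/- For g = u₂(H) and ω(x,y) = tr(d[x,y]) with d ∈ u(H), the associated group cocycle for the affine action of G = U₂(H) is Θ_ω(g) = g d g^{-1} − d (under the identification g' ≅ g via the trace pairing), and Θ_ω is bounded on G if and only if d ∈ ℝ i1 + u₂(H). -/

import Mathlib

set_option maxHeartbeats 1000000
set_option synthInstance.maxHeartbeats 400000
set_option linter.unusedSectionVars false

noncomputable section
namespace Stmt18Aux

section base
variable {H : Type} [NormedAddCommGroup H] [InnerProductSpace ℂ H] [CompleteSpace H]
  {J : Type} (e : HilbertBasis J ℂ H)

local notation "⟪" x ", " y "⟫" => @inner ℂ _ _ x y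

lemma pars_summable (v : H) : Summable fun i => ‖⟪e i, v⟫‖ ^ 2 := by
  have h : Memℓp (⇑(e.repr v)) 2 := lp.memℓp (e.repr v)
  rw [memℓp_gen_iff (by norm_num)] at h
  have h2 : ∀ i, ‖(e.repr v) i‖ ^ ((2:ENNReal)).toReal = ‖⟪e i, v⟫‖ ^ 2 := by
    intro i
    rw [e.repr_apply_apply]
    norm_num
  exact (summable_congr h2).1 h

lemma pars_tsum (v : H) : ∑' i, ‖⟪e i, v⟫‖ ^ 2 = ‖v‖ ^ 2 := by
  have h := lp.norm_rpow_eq_tsum (p := 2) (by norm_num) (e.repr v)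
  have h2 : ∀ i, ‖(e.repr v) i‖ ^ ((2:ENNReal)).toReal = ‖⟪e i, v⟫‖ ^ 2 := by
    intro i; rw [e.repr_apply_apply]; norm_num
  rw [tsum_congr h2] at h
  rw [h.symm, e.repr.norm_map]
  norm_num

lemma hs_prod_iff (A : H →L[ℂ] H) :
    Summable (fun j => ‖A (e j)‖ ^ 2) ↔
      Summable (fun p : J × J => ‖⟪e p.2, A (e p.1)⟫‖ ^ 2) := by
  have key := summable_prod_of_nonneg
    (f := fun p : J × J => ‖⟪e p.2, A (e p.1)⟫‖ ^ 2) (fun p => sq_nonneg _)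
  constructor
  · intro hA
    refine key.2 ⟨fun x => ?_, ?_⟩
    · dsimp only
      exact pars_summable e (A (e x))
    · dsimp only
      simpa only [pars_tsum] using hA
  · intro h
    have h2 := (key.1 h).2
    dsimp only at h2
    simpa only [pars_tsum] using h2

lemma hs_tsum_prod (A : H →L[ℂ] H) (hA : Summable fun j => ‖A (e j)‖ ^ 2) :
    ∑' j, ‖A (e j)‖ ^ 2 = ∑' p : J × J, ‖⟪e p.2, A (e p.1)⟫‖ ^ 2 := by
  have hfib : ∀ b : J, Summable fun c : J =>
      (fun p : J × J => ‖⟪e p.2, A (e p.1)⟫‖ ^ 2) (b, c) := by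
    intro b; dsimp only; exact pars_summable e (A (e b))
  rw [Summable.tsum_prod' ((hs_prod_iff e A).1 hA) hfib]
  dsimp only
  exact tsum_congr fun j => (pars_tsum e _).symm

lemma entry_adj (A : H →L[ℂ] H) (i j : J) :
    ‖⟪e i, (ContinuousLinearMap.adjoint A) (e j)⟫‖ ^ 2 = ‖⟪e j, A (e i)⟫‖ ^ 2 := by
  rw [norm_inner_symm, ContinuousLinearMap.adjoint_inner_left]

lemma hs_adj_summable {A : H →L[ℂ] H} (hA : Summable fun j => ‖A (e j)‖ ^ 2) :
    Summable fun j => ‖(ContinuousLinearMap.adjoint A) (e j)‖ ^ 2 := by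
  refine (hs_prod_iff e _).2 ?_
  have h := (Equiv.prodComm J J).summable_iff.2 ((hs_prod_iff e A).1 hA)
  refine h.congr fun p => ?_
  simpa using (entry_adj e A p.2 p.1).symm

lemma hs_star_summable {A : H →L[ℂ] H} (hA : Summable fun j => ‖A (e j)‖ ^ 2) :
    Summable fun j => ‖(star A) (e j)‖ ^ 2 := by
  rw [ContinuousLinearMap.star_eq_adjoint]; exact hs_adj_summable e hA

lemma hs_adj_tsum {A : H →L[ℂ] H} (hA : Summable fun j => ‖A (e j)‖ ^ 2) :
    ∑' j, ‖(ContinuousLinearMap.adjoint A) (e j)‖ ^ 2 = ∑' j, ‖A (e j)‖ ^ 2 := by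
  rw [hs_tsum_prod e _ (hs_adj_summable e hA), hs_tsum_prod e A hA]
  rw [← Equiv.tsum_eq (Equiv.prodComm J J) (fun p : J × J => ‖⟪e p.2, A (e p.1)⟫‖ ^ 2)]
  exact tsum_congr fun p => by simpa using entry_adj e A p.2 p.1

lemma hs_comp_left_summable (B : H →L[ℂ] H) {A : H →L[ℂ] H}
    (hA : Summable fun j => ‖A (e j)‖ ^ 2) :
    Summable fun j => ‖(B * A) (e j)‖ ^ 2 := by
  refine Summable.of_nonneg_of_le (fun j => sq_nonneg _) (fun j => ?_) (hA.mul_left (‖B‖ ^ 2))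
  have h : ‖B (A (e j))‖ ≤ ‖B‖ * ‖A (e j)‖ := B.le_opNorm _
  calc ‖(B * A) (e j)‖ ^ 2 = ‖B (A (e j))‖ ^ 2 := rfl
    _ ≤ (‖B‖ * ‖A (e j)‖) ^ 2 := by
        exact pow_le_pow_left₀ (norm_nonneg _) h 2
    _ = ‖B‖ ^ 2 * ‖A (e j)‖ ^ 2 := by ring

lemma unit_norm {g : H →L[ℂ] H} (hg : g ∈ unitary (H →L[ℂ] H)) (x : H) : ‖g x‖ = ‖x‖ := by
  have h1 : star g * g = 1 := (Unitary.mem_iff.1 hg).1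
  have hinner : ⟪g x, g x⟫ = ⟪x, x⟫ := by
    calc ⟪g x, g x⟫ = ⟪(ContinuousLinearMap.adjoint g) (g x), x⟫ :=
          (ContinuousLinearMap.adjoint_inner_left g x (g x)).symm
      _ = ⟪((star g) * g) x, x⟫ := by rw [ContinuousLinearMap.star_eq_adjoint]; rfl
      _ = ⟪x, x⟫ := by rw [h1]; rfl
  rw [norm_eq_sqrt_re_inner (𝕜 := ℂ) (g x), norm_eq_sqrt_re_inner (𝕜 := ℂ) x, hinner]

lemma hs_unit_left_tsum {g : H →L[ℂ] H} (hg : g ∈ unitary (H →L[ℂ] H)) (A : H →L[ℂ] H) :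
    ∑' j, ‖(g * A) (e j)‖ ^ 2 = ∑' j, ‖A (e j)‖ ^ 2 :=
  tsum_congr fun j => by rw [ContinuousLinearMap.mul_apply, unit_norm hg]

lemma hs_unit_left_summable {g : H →L[ℂ] H} (hg : g ∈ unitary (H →L[ℂ] H)) {A : H →L[ℂ] H}
    (hA : Summable fun j => ‖A (e j)‖ ^ 2) :
    Summable fun j => ‖(g * A) (e j)‖ ^ 2 :=
  hA.congr fun j => by rw [ContinuousLinearMap.mul_apply, unit_norm hg]

lemma hs_unit_right_summable {g : H →L[ℂ] H} (hg : g ∈ unitary (H →L[ℂ] H)) {A : H →L[ℂ] H}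
    (hA : Summable fun j => ‖A (e j)‖ ^ 2) :
    Summable fun j => ‖(A * g) (e j)‖ ^ 2 := by
  have h1 : Summable fun j => ‖(star (A * g)) (e j)‖ ^ 2 := by
    rw [star_mul]
    exact hs_unit_left_summable e (Unitary.star_mem hg) (hs_star_summable e hA)
  have := hs_star_summable e h1
  simpa [star_star] using this

lemma hs_unit_right_tsum {g : H →L[ℂ] H} (hg : g ∈ unitary (H →L[ℂ] H)) {A : H →L[ℂ] H}
    (hA : Summable fun j => ‖A (e j)‖ ^ 2) :
    ∑' j, ‖(A * g) (e j)‖ ^ 2 = ∑' j, ‖A (e j)‖ ^ 2 := by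
  have h1 : Summable fun j => ‖(star (A * g)) (e j)‖ ^ 2 := by
    rw [star_mul]
    exact hs_unit_left_summable e (Unitary.star_mem hg) (hs_star_summable e hA)
  calc ∑' j, ‖(A * g) (e j)‖ ^ 2
      = ∑' j, ‖(ContinuousLinearMap.adjoint (star (A * g))) (e j)‖ ^ 2 := by
        rw [← ContinuousLinearMap.star_eq_adjoint, star_star]
    _ = ∑' j, ‖(star (A * g)) (e j)‖ ^ 2 := hs_adj_tsum e h1
    _ = ∑' j, ‖((star g) * (star A)) (e j)‖ ^ 2 := by rw [star_mul]
    _ = ∑' j, ‖(star A) (e j)‖ ^ 2 := hs_unit_left_tsum e (Unitary.star_mem hg) _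
    _ = ∑' j, ‖(ContinuousLinearMap.adjoint A) (e j)‖ ^ 2 := by
        rw [ContinuousLinearMap.star_eq_adjoint]
    _ = ∑' j, ‖A (e j)‖ ^ 2 := hs_adj_tsum e hA

lemma hs_sub_summable {A B : H →L[ℂ] H} (hA : Summable fun j => ‖A (e j)‖ ^ 2)
    (hB : Summable fun j => ‖B (e j)‖ ^ 2) :
    Summable fun j => ‖(A - B) (e j)‖ ^ 2 := by
  refine Summable.of_nonneg_of_le (fun j => sq_nonneg _) (fun j => ?_)
    ((hA.mul_left 2).add (hB.mul_left 2))
  have h : ‖(A - B) (e j)‖ ≤ ‖A (e j)‖ + ‖B (e j)‖ := by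
    rw [ContinuousLinearMap.sub_apply]; exact norm_sub_le _ _
  calc ‖(A - B) (e j)‖ ^ 2 ≤ (‖A (e j)‖ + ‖B (e j)‖) ^ 2 :=
        pow_le_pow_left₀ (norm_nonneg _) h 2
    _ ≤ 2 * ‖A (e j)‖ ^ 2 + 2 * ‖B (e j)‖ ^ 2 := by
        nlinarith [sq_nonneg (‖A (e j)‖ - ‖B (e j)‖)]

end base
section ops
variable {H : Type} [NormedAddCommGroup H] [InnerProductSpace ℂ H] [CompleteSpace H]
  {J : Type} (e : HilbertBasis J ℂ H)

local notation "⟪" x ", " y "⟫" => @inner ℂ _ _ x y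

open scoped Classical

def Eop (a b : J) : H →L[ℂ] H :=
  (ContinuousLinearMap.toSpanSingleton ℂ (e a)).comp (innerSL ℂ (e b))

lemma Eop_apply (a b : J) (x : H) : Eop e a b x = ⟪e b, x⟫ • e a := rfl

lemma inner_basis (i j : J) : ⟪e i, e j⟫ = if i = j then (1:ℂ) else 0 :=
  orthonormal_iff_ite.mp e.orthonormal i j

lemma Eop_apply_basis (a b c : J) : Eop e a b (e c) = if b = c then e a else 0 := by
  rw [Eop_apply, inner_basis]
  split <;> simp

lemma Eop_mul (a b c f : J) : Eop e a b * Eop e c f = if b = c then Eop e a f else 0 := by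
  ext x
  rw [ContinuousLinearMap.mul_apply, Eop_apply, Eop_apply, inner_smul_right, inner_basis]
  split
  · simp [Eop_apply]
  · simp

lemma star_Eop (a b : J) : star (Eop e a b) = Eop e b a := by
  rw [ContinuousLinearMap.star_eq_adjoint]
  refine (((Eop e b a).eq_adjoint_iff (Eop e a b)).2 fun x y => ?_).symm
  rw [Eop_apply, Eop_apply, inner_smul_left, inner_smul_right, inner_conj_symm]
  ring

lemma mem_unitary_one_add {K : H →L[ℂ] H} (hK : star K = K) (hK2 : K * K = -(K + K)) :
    (1 + K) ∈ unitary (H →L[ℂ] H) := by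
  have hmul : (1 + K) * (1 + K) = 1 + (K + K + K * K) := by noncomm_ring
  rw [hK2] at hmul
  simp only [add_neg_cancel, add_zero] at hmul
  rw [Unitary.mem_iff, star_add, star_one, hK]
  exact ⟨hmul, hmul⟩

lemma diag_purely_imag (d : H →L[ℂ] H) (hd : star d = -d) (v : H) : (⟪v, d v⟫).re = 0 := by
  have h : ⟪(star d) v, v⟫ = ⟪v, d v⟫ := by
    rw [ContinuousLinearMap.star_eq_adjoint]
    exact ContinuousLinearMap.adjoint_inner_left d v v
  rw [hd] at h
  have h2 : -⟪d v, v⟫ = ⟪v, d v⟫ := by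
    rw [← h]
    simp
  have h3 : ⟪d v, v⟫ = (starRingEnd ℂ) ⟪v, d v⟫ := by rw [inner_conj_symm]
  rw [h3] at h2
  have h4 := congrArg Complex.re h2
  simp only [Complex.neg_re, Complex.conj_re] at h4
  linarith

lemma entry_of_diag_action {g : H →L[ℂ] H} (d : H →L[ℂ] H) (hgs : star g = g)
    {εf : J → ℝ} (hact : ∀ k, g (e k) = (εf k : ℂ) • e k) (i j : J) :
    ⟪e i, (g * d * star g - d) (e j)⟫ = ((εf i * εf j - 1 : ℝ) : ℂ) * ⟪e i, d (e j)⟫ := by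
  have hadj : ∀ y : H, ⟪e i, g y⟫ = ⟪g (e i), y⟫ := by
    intro y
    conv_rhs => rw [← hgs, ContinuousLinearMap.star_eq_adjoint]
    exact (ContinuousLinearMap.adjoint_inner_left g y (e i)).symm
  rw [ContinuousLinearMap.sub_apply, inner_sub_right, hgs,
    ContinuousLinearMap.mul_apply, ContinuousLinearMap.mul_apply,
    hadj, hact, hact, inner_smul_left]
  rw [d.map_smul, inner_smul_right, Complex.conj_ofReal]
  push_cast
  ring

lemma diag_entry_of_swap_action {g : H →L[ℂ] H} (d : H →L[ℂ] H) (hgs : star g = g)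
    {j j' : J} (hact : g (e j) = e j') :
    ⟪e j, (g * d * star g - d) (e j)⟫ = ⟪e j', d (e j')⟫ - ⟪e j, d (e j)⟫ := by
  have hadj : ∀ y : H, ⟪e j, g y⟫ = ⟪g (e j), y⟫ := by
    intro y
    conv_rhs => rw [← hgs, ContinuousLinearMap.star_eq_adjoint]
    exact (ContinuousLinearMap.adjoint_inner_left g y (e j)).symm
  rw [ContinuousLinearMap.sub_apply, inner_sub_right, hgs,
    ContinuousLinearMap.mul_apply, ContinuousLinearMap.mul_apply, hadj, hact]

/-! ### Projections and reflections -/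

def Pproj (S : Finset J) : H →L[ℂ] H := ∑ k ∈ S, Eop e k k

lemma Pproj_mul (S : Finset J) : Pproj e S * Pproj e S = Pproj e S := by
  rw [Pproj, Finset.sum_mul_sum]
  have h : ∀ k ∈ S, ∑ l ∈ S, Eop e k k * Eop e l l = Eop e k k := by
    intro k hk
    rw [Finset.sum_congr rfl (fun l _ => Eop_mul e k k l l)]
    simp [Finset.sum_ite_eq, hk]
  rw [Finset.sum_congr rfl h]

lemma star_Pproj (S : Finset J) : star (Pproj e S) = Pproj e S := by
  rw [Pproj, star_sum]
  exact Finset.sum_congr rfl fun k _ => star_Eop e k k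

lemma Pproj_apply_basis (S : Finset J) (j : J) :
    Pproj e S (e j) = if j ∈ S then e j else 0 := by
  rw [Pproj, ContinuousLinearMap.sum_apply]
  rw [Finset.sum_congr rfl (fun k _ => Eop_apply_basis e k k j)]
  simp [Finset.sum_ite_eq']

def grefl (S : Finset J) : H →L[ℂ] H := 1 + -(Pproj e S + Pproj e S)

lemma grefl_unitary (S : Finset J) : grefl e S ∈ unitary (H →L[ℂ] H) := by
  refine mem_unitary_one_add ?_ ?_
  · rw [star_neg, star_add, star_Pproj]
  · have hP := Pproj_mul e S
    have h1 : -(Pproj e S + Pproj e S) * -(Pproj e S + Pproj e S)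
        = Pproj e S * Pproj e S + Pproj e S * Pproj e S
          + Pproj e S * Pproj e S + Pproj e S * Pproj e S := by noncomm_ring
    rw [h1, hP]
    abel

lemma grefl_apply_basis (S : Finset J) (j : J) :
    grefl e S (e j) = (((if j ∈ S then (-1:ℝ) else 1) : ℝ) : ℂ) • e j := by
  rw [grefl]
  rw [ContinuousLinearMap.add_apply, ContinuousLinearMap.neg_apply,
    ContinuousLinearMap.add_apply, ContinuousLinearMap.one_apply, Pproj_apply_basis]
  split
  · push_cast
    rw [neg_smul, one_smul]
    abel
  · push_cast
    rw [one_smul]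
    simp

lemma grefl_sub_one_apply (S : Finset J) (j : J) (hj : j ∉ S) :
    (grefl e S - 1) (e j) = 0 := by
  rw [ContinuousLinearMap.sub_apply, ContinuousLinearMap.one_apply, grefl_apply_basis, if_neg hj]
  push_cast
  rw [one_smul, sub_self]

lemma grefl_sub_one_summable (S : Finset J) :
    Summable fun j => ‖(grefl e S - 1) (e j)‖ ^ 2 := by
  refine summable_of_ne_finset_zero (s := S) fun j hj => ?_
  rw [grefl_sub_one_apply e S j hj]
  simp

/-! ### Swaps -/

section swap
variable (G : Finset J) (p : J → J)

def Mswap (j : J) : H →L[ℂ] H :=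
  Eop e (p j) j + Eop e j (p j) - Eop e j j - Eop e (p j) (p j)

def Kswap : H →L[ℂ] H := ∑ j ∈ G, Mswap e p j

variable {G p}
variable (hout : ∀ j ∈ G, p j ∉ G) (hinj : ∀ j ∈ G, ∀ k ∈ G, p j = p k → j = k)

lemma star_Mswap (j : J) : star (Mswap e p j) = Mswap e p j := by
  simp only [Mswap, star_sub, star_add, star_Eop]
  abel

include hout in
lemma Mswap_mul_self {j : J} (hj : j ∈ G) :
    Mswap e p j * Mswap e p j = -(Mswap e p j + Mswap e p j) := by
  have hne : p j ≠ j := fun h => hout j hj (by rw [h]; exact hj)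
  simp only [Mswap, sub_mul, mul_sub, add_mul, mul_add, Eop_mul, if_pos rfl, if_neg hne,
    if_neg hne.symm, if_true]
  simp only [sub_zero, zero_sub, add_zero, zero_add, sub_neg_eq_add]
  abel

include hout hinj in
lemma Mswap_mul_ne {j k : J} (hj : j ∈ G) (hk : k ∈ G) (hjk : j ≠ k) :
    Mswap e p j * Mswap e p k = 0 := by
  have h2 : j ≠ p k := fun h => hout k hk (by rw [← h]; exact hj)
  have h3 : p j ≠ k := fun h => hout j hj (by rw [h]; exact hk)
  have h4 : p j ≠ p k := fun h => hjk (hinj j hj k hk h)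
  simp [Mswap, sub_mul, mul_sub, add_mul, mul_add, Eop_mul, hjk, h2, h3, h4]

lemma star_Kswap : star (Kswap e G p) = Kswap e G p := by
  rw [Kswap, star_sum]
  exact Finset.sum_congr rfl fun j _ => star_Mswap e j

include hout hinj in
lemma Kswap_mul : Kswap e G p * Kswap e G p = -(Kswap e G p + Kswap e G p) := by
  rw [Kswap, Finset.sum_mul_sum]
  have h : ∀ j ∈ G, ∑ k ∈ G, Mswap e p j * Mswap e p k = -(Mswap e p j + Mswap e p j) := by
    intro j hj
    rw [Finset.sum_eq_single j
      (fun k hk hkj => Mswap_mul_ne e hout hinj hj hk (fun h => hkj h.symm))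
      (fun h => absurd hj h)]
    exact Mswap_mul_self e hout hj
  rw [Finset.sum_congr rfl h]
  rw [Finset.sum_neg_distrib, Finset.sum_add_distrib]

include hout hinj in
lemma gswap_unitary : (1 + Kswap e G p) ∈ unitary (H →L[ℂ] H) :=
  mem_unitary_one_add (star_Kswap e) (Kswap_mul e hout hinj)

include hout in
lemma Kswap_apply_basis_mem {j : J} (hj : j ∈ G) :
    Kswap e G p (e j) = e (p j) - e j := by
  rw [Kswap, ContinuousLinearMap.sum_apply]
  rw [Finset.sum_eq_single j ?hne (fun h => absurd hj h)]
  case hne =>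
    intro k hk hkj
    have h1 : k ≠ j := hkj
    have h2 : p k ≠ j := fun h => hout k hk (by rw [h]; exact hj)
    simp [Mswap, Eop_apply_basis, h1, h2]
  · have hpj : p j ≠ j := fun h => hout j hj (by rw [h]; exact hj)
    simp [Mswap, Eop_apply_basis, hpj]

include hout in
lemma Kswap_apply_basis_notin {l : J} (hl1 : l ∉ G) (hl2 : ∀ j ∈ G, p j ≠ l) :
    Kswap e G p (e l) = 0 := by
  rw [Kswap, ContinuousLinearMap.sum_apply]
  refine Finset.sum_eq_zero fun j hj => ?_
  have h1 : j ≠ l := fun h => hl1 (h ▸ hj)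
  have h2 : p j ≠ l := hl2 j hj
  simp [Mswap, Eop_apply_basis, h1, h2]

include hout in
lemma gswap_sub_one_summable :
    Summable fun j => ‖((1 + Kswap e G p) - 1) (e j)‖ ^ 2 := by
  classical
  refine summable_of_ne_finset_zero (s := G ∪ G.image p) fun l hl => ?_
  have hl1 : l ∉ G := fun h => hl (Finset.mem_union_left _ h)
  have hl2 : ∀ j ∈ G, p j ≠ l := by
    intro j hj h
    exact hl (Finset.mem_union_right _ (Finset.mem_image.2 ⟨j, hj, h⟩))
  have h0 : ((1 + Kswap e G p) - 1) (e l) = 0 := by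
    rw [add_sub_cancel_left]
    exact Kswap_apply_basis_notin e hout hl1 hl2
  rw [h0]
  simp

end swap

/-! ### Theta lemmas -/

lemma theta_summable (d : H →L[ℂ] H) {g : H →L[ℂ] H} (hg : g ∈ unitary (H →L[ℂ] H))
    (hgs : Summable fun j => ‖(g - 1) (e j)‖ ^ 2) :
    Summable fun j => ‖(g * d * star g - d) (e j)‖ ^ 2 := by
  have hstar1 : Summable fun j => ‖(star g - 1) (e j)‖ ^ 2 := by
    have h := hs_star_summable e hgs
    simpa only [star_sub, star_one] using h
  have hX1 : Summable fun j => ‖((g - 1) * d) (e j)‖ ^ 2 := by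
    have h1 : Summable fun j => ‖(star d * (star g - 1)) (e j)‖ ^ 2 :=
      hs_comp_left_summable e (star d) hstar1
    have h2 := hs_star_summable e h1
    simpa only [star_mul, star_star, star_sub, star_one] using h2
  have hX2 : Summable fun j => ‖(d * (g - 1)) (e j)‖ ^ 2 := hs_comp_left_summable e d hgs
  have hsub := hs_sub_summable e hX1 hX2
  have hY := hs_unit_right_summable e (Unitary.star_mem hg) hsub
  have hgg : g * star g = 1 := (Unitary.mem_iff.1 hg).2
  have heq : ((g - 1) * d - d * (g - 1)) * star g = g * d * star g - d := by
    have h0 : (g - 1) * d - d * (g - 1) = g * d - d * g := by noncomm_ring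
    rw [h0, sub_mul, mul_assoc d g (star g), hgg, mul_one]
  rw [heq] at hY
  exact hY

lemma theta_skew (d : H →L[ℂ] H) (hd : star d = -d) (g : H →L[ℂ] H) :
    star (g * d * star g - d) = -(g * d * star g - d) := by
  simp only [star_sub, star_mul, star_star, hd]
  noncomm_ring

lemma deriv_theta (d x : H →L[ℂ] H) (hx : star x = -x) :
    HasDerivAt (fun t : ℝ =>
        NormedSpace.exp (t • x) * d * star (NormedSpace.exp (t • x)) - d)
      (x * d - d * x) 0 := by
  have hfun : (fun t : ℝ =>
        NormedSpace.exp (t • x) * d * star (NormedSpace.exp (t • x)) - d)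
      = fun t : ℝ => NormedSpace.exp (t • x) * d * NormedSpace.exp (t • (-x)) - d := by
    funext t
    rw [NormedSpace.star_exp, star_smul, star_trivial, hx]
  rw [hfun]
  have h1 := hasDerivAt_exp_smul_const (𝕂 := ℝ) (x := x) 0
  have h2 := hasDerivAt_exp_smul_const (𝕂 := ℝ) (x := -x) 0
  rw [zero_smul, NormedSpace.exp_zero, one_mul] at h1 h2
  have h3 := ((h1.mul_const d).mul h2).sub_const d
  refine h3.congr_deriv ?_
  simp only [zero_smul, NormedSpace.exp_zero, mul_one, one_mul, mul_neg]
  abel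

/-! ### Norm-squared of a complex number -/

lemma norm_sq_eq_re_im (w : ℂ) : ‖w‖ ^ 2 = w.re ^ 2 + w.im ^ 2 := by
  rw [Complex.sq_norm, Complex.normSq_apply]
  ring

/-! ### The off-diagonal bound -/

lemma star_grefl (S : Finset J) : star (grefl e S) = grefl e S := by
  rw [grefl, star_add, star_one, star_neg, star_add, star_Pproj]

lemma offdiag_bound (d : H →L[ℂ] H) (M : ℝ)
    (hbd : ∀ g : H →L[ℂ] H, g ∈ unitary (H →L[ℂ] H) →
      (Summable fun j => ‖(g - 1) (e j)‖ ^ 2) →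
      (∑' j, ‖(g * d * star g - d) (e j)‖ ^ 2) ≤ M)
    (F : Finset J) :
    ∑ p ∈ (F ×ˢ F).filter (fun p => p.1 ≠ p.2), ‖⟪e p.2, d (e p.1)⟫‖ ^ 2 ≤ M / 2 := by
  set c := F.card with hc
  set ε : Finset J → J → ℝ := fun S k => if k ∈ S then -1 else 1 with hε
  have hεsq : ∀ S k, ε S k * ε S k = 1 := by
    intro S k
    rw [hε]
    dsimp only
    split <;> norm_num
  -- the per-reflection bound
  have hper : ∀ S ∈ F.powerset,
      ∑ j ∈ F, ∑ i ∈ F, (ε S i * ε S j - 1) ^ 2 * ‖⟪e i, d (e j)⟫‖ ^ 2 ≤ M := by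
    intro S _
    have hgu := grefl_unitary e S
    have hgsum := grefl_sub_one_summable e S
    have hΘsum := theta_summable e d hgu hgsum
    have hM' := hbd _ hgu hgsum
    have hact : ∀ k, grefl e S (e k) = ((ε S k : ℝ) : ℂ) • e k := fun k =>
      grefl_apply_basis e S k
    have hentry : ∀ i j : J,
        (ε S i * ε S j - 1) ^ 2 * ‖⟪e i, d (e j)⟫‖ ^ 2
          = ‖⟪e i, (grefl e S * d * star (grefl e S) - d) (e j)⟫‖ ^ 2 := by
      intro i j
      rw [entry_of_diag_action e d (star_grefl e S) hact i j, norm_mul, mul_pow,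
        Complex.norm_real, Real.norm_eq_abs, sq_abs]
    calc ∑ j ∈ F, ∑ i ∈ F, (ε S i * ε S j - 1) ^ 2 * ‖⟪e i, d (e j)⟫‖ ^ 2
        = ∑ j ∈ F, ∑ i ∈ F,
            ‖⟪e i, (grefl e S * d * star (grefl e S) - d) (e j)⟫‖ ^ 2 :=
          Finset.sum_congr rfl fun j _ => Finset.sum_congr rfl fun i _ => hentry i j
      _ ≤ ∑ j ∈ F, ‖(grefl e S * d * star (grefl e S) - d) (e j)‖ ^ 2 :=
          Finset.sum_le_sum fun j _ =>
            Orthonormal.sum_inner_products_le _ e.orthonormal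
      _ ≤ ∑' j, ‖(grefl e S * d * star (grefl e S) - d) (e j)‖ ^ 2 :=
          Summable.sum_le_tsum F (fun i _ => sq_nonneg _) hΘsum
      _ ≤ M := hM'
  -- sum over all subsets
  have htotal : ∑ S ∈ F.powerset, ∑ j ∈ F, ∑ i ∈ F,
      (ε S i * ε S j - 1) ^ 2 * ‖⟪e i, d (e j)⟫‖ ^ 2 ≤ (2:ℝ) ^ c * M := by
    calc ∑ S ∈ F.powerset, ∑ j ∈ F, ∑ i ∈ F,
        (ε S i * ε S j - 1) ^ 2 * ‖⟪e i, d (e j)⟫‖ ^ 2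
        ≤ ∑ _S ∈ F.powerset, M := Finset.sum_le_sum hper
      _ = (2:ℝ) ^ c * M := by
          rw [Finset.sum_const, Finset.card_powerset, nsmul_eq_mul]
          push_cast
          ring
  -- the sign-cancellation identity
  have hzero : ∀ i ∈ F, ∀ j ∈ F, i ≠ j →
      ∑ S ∈ F.powerset, ε S i * ε S j = 0 := by
    intro i hi j hj hij
    have hprod := Finset.prod_add
      (fun k => (if k = i then (-1:ℝ) else 1) * (if k = j then (-1:ℝ) else 1))
      (fun _ => (1:ℝ)) F
    have hL : ∏ k ∈ F, ((if k = i then (-1:ℝ) else 1) * (if k = j then (-1:ℝ) else 1) + 1)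
        = 0 := by
      refine Finset.prod_eq_zero hi ?_
      rw [if_pos rfl, if_neg hij]
      norm_num
    rw [hL] at hprod
    have hR : ∀ S ∈ F.powerset,
        (∏ k ∈ S, ((if k = i then (-1:ℝ) else 1) * (if k = j then (-1:ℝ) else 1)))
          * ∏ _k ∈ F \ S, (1:ℝ) = ε S i * ε S j := by
      intro S _
      rw [Finset.prod_const_one, mul_one, Finset.prod_mul_distrib,
        Finset.prod_ite_eq' S i (fun _ => (-1:ℝ)), Finset.prod_ite_eq' S j (fun _ => (-1:ℝ))]
    rw [Finset.sum_congr rfl hR] at hprod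
    exact hprod.symm
  -- pointwise evaluation of the inner sum over subsets
  have hpoint : ∀ j ∈ F, ∀ i ∈ F,
      ∑ S ∈ F.powerset, (ε S i * ε S j - 1) ^ 2 * ‖⟪e i, d (e j)⟫‖ ^ 2
        = if i ≠ j then (2:ℝ) ^ (c + 1) * ‖⟪e i, d (e j)⟫‖ ^ 2 else 0 := by
    intro j hj i hi
    by_cases hij : i = j
    · subst hij
      rw [if_neg (by simp)]
      refine Finset.sum_eq_zero fun S _ => ?_
      rw [hεsq]
      norm_num
    · rw [if_pos hij]
      have h2 : ∀ S ∈ F.powerset, (ε S i * ε S j - 1) ^ 2 * ‖⟪e i, d (e j)⟫‖ ^ 2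
          = (2 - 2 * (ε S i * ε S j)) * ‖⟪e i, d (e j)⟫‖ ^ 2 := by
        intro S _
        have : (ε S i * ε S j - 1) ^ 2
            = (ε S i * ε S i) * (ε S j * ε S j) - 2 * (ε S i * ε S j) + 1 := by ring
        rw [this, hεsq, hεsq]
        ring_nf
      rw [Finset.sum_congr rfl h2, ← Finset.sum_mul]
      have h3 : ∑ S ∈ F.powerset, (2 - 2 * (ε S i * ε S j)) = (2:ℝ) ^ (c + 1) := by
        rw [Finset.sum_sub_distrib, Finset.sum_const, ← Finset.mul_sum,
          hzero i hi j hj hij, Finset.card_powerset, nsmul_eq_mul]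
        push_cast
        ring
      rw [h3]
  -- assembling
  have hswap : ∑ S ∈ F.powerset, ∑ j ∈ F, ∑ i ∈ F,
      (ε S i * ε S j - 1) ^ 2 * ‖⟪e i, d (e j)⟫‖ ^ 2
      = ∑ j ∈ F, ∑ i ∈ F, ∑ S ∈ F.powerset,
          (ε S i * ε S j - 1) ^ 2 * ‖⟪e i, d (e j)⟫‖ ^ 2 := by
    rw [Finset.sum_comm]
    exact Finset.sum_congr rfl fun j _ => Finset.sum_comm
  have hEq : ∑ S ∈ F.powerset, ∑ j ∈ F, ∑ i ∈ F,
      (ε S i * ε S j - 1) ^ 2 * ‖⟪e i, d (e j)⟫‖ ^ 2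
      = (2:ℝ) ^ (c + 1) *
          ∑ p ∈ (F ×ˢ F).filter (fun p => p.1 ≠ p.2), ‖⟪e p.2, d (e p.1)⟫‖ ^ 2 := by
    rw [hswap]
    rw [Finset.sum_congr rfl fun j hj => Finset.sum_congr rfl fun i hi => hpoint j hj i hi]
    rw [Finset.sum_filter, Finset.sum_product, Finset.mul_sum]
    refine Finset.sum_congr rfl fun j _ => ?_
    rw [Finset.mul_sum]
    refine Finset.sum_congr rfl fun i _ => ?_
    rw [mul_ite, mul_zero]
    by_cases hij : i = j
    · rw [if_neg (by simp [hij]), if_neg (by simp [hij])]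
    · rw [if_pos hij, if_pos (fun h => hij h.symm)]
  -- conclude
  rw [hEq, pow_succ] at htotal
  have hpos : (0:ℝ) < 2 ^ c := by positivity
  rw [mul_comm ((2:ℝ)^c) 2, mul_assoc] at htotal
  -- htotal : 2 * (2^c * SF) ≤ 2^c * M   -- careful, fix below if shape differs
  nlinarith [htotal, hpos,
    Finset.sum_nonneg (fun p (_ : p ∈ (F ×ˢ F).filter (fun p => p.1 ≠ p.2)) =>
      sq_nonneg ‖⟪e p.2, d (e p.1)⟫‖)]

/-! ### The diagonal bound -/

lemma diag_bound [Infinite J] (d : H →L[ℂ] H) (M : ℝ)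
    (hbd : ∀ g : H →L[ℂ] H, g ∈ unitary (H →L[ℂ] H) →
      (Summable fun j => ‖(g - 1) (e j)‖ ^ 2) →
      (∑' j, ‖(g * d * star g - d) (e j)‖ ^ 2) ≤ M) :
    ∃ c : ℝ, ∀ G : Finset J, ∑ j ∈ G, ((⟪e j, d (e j)⟫).im - c) ^ 2 ≤ 2 * M + 2 := by
  classical
  set t : J → ℝ := fun j => (⟪e j, d (e j)⟫).im with ht
  have htmem : ∀ j, t j ∈ Set.Icc (-‖d‖) ‖d‖ := by
    intro j
    have h1 : ‖e j‖ = 1 := e.orthonormal.1 j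
    have h2 : ‖⟪e j, d (e j)⟫‖ ≤ ‖d‖ := by
      calc ‖⟪e j, d (e j)⟫‖ ≤ ‖e j‖ * ‖d (e j)‖ := norm_inner_le_norm _ _
        _ = ‖d (e j)‖ := by rw [h1, one_mul]
        _ ≤ ‖d‖ * ‖e j‖ := d.le_opNorm _
        _ = ‖d‖ := by rw [h1, mul_one]
    have h4 : |(⟪e j, d (e j)⟫).im| ≤ ‖⟪e j, d (e j)⟫‖ := by
      exact Complex.abs_im_le_norm _
    exact Set.mem_Icc.2 (abs_le.1 (le_trans h4 h2))
  obtain ⟨c, -, hc⟩ := (isCompact_Icc (a := -‖d‖) (b := ‖d‖)).exists_clusterPt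
    (f := Filter.map t Filter.cofinite)
    (Filter.le_principal_iff.2 (Filter.mem_map.2 (Filter.univ_mem' htmem)))
  refine ⟨c, fun G => ?_⟩
  set n := G.card with hn
  have hδpos : (0:ℝ) < 1 / (n + 1) := by positivity
  have hc' : MapClusterPt c Filter.cofinite t := hc
  have hfreq : {j | |t j - c| < 1 / (n + 1)}.Infinite := by
    rw [← Filter.frequently_cofinite_iff_infinite]
    have h1 := (mapClusterPt_iff_frequently.1 hc') _ (Metric.ball_mem_nhds c hδpos)
    refine h1.mono fun j hj => ?_
    simpa [Real.dist_eq] using hj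
  have hA : ({j | |t j - c| < 1 / (n + 1)} \ ↑G).Infinite := hfreq.diff G.finite_toSet
  obtain ⟨T, hTsub, hTcard⟩ := hA.exists_subset_card_eq n
  have hcardeq : G.card = T.card := by rw [hTcard]
  set φ := Finset.equivOfCardEq hcardeq with hφ
  set p : J → J := fun j => if h : j ∈ G then (φ ⟨j, h⟩ : J) else j with hp
  have hpmem : ∀ j (h : j ∈ G), (p j) ∈ T := by
    intro j h
    rw [hp]
    dsimp only
    rw [dif_pos h]
    exact (φ ⟨j, h⟩).2
  have hpA : ∀ j ∈ G, |t (p j) - c| < 1 / (n + 1) ∧ p j ∉ G := by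
    intro j h
    have h2 := hTsub (hpmem j h)
    exact ⟨h2.1, fun hG => h2.2 (Finset.mem_coe.2 hG)⟩
  have hout : ∀ j ∈ G, p j ∉ G := fun j h => (hpA j h).2
  have hinj : ∀ j ∈ G, ∀ k ∈ G, p j = p k → j = k := by
    intro j hj k hk hpe
    rw [hp] at hpe
    dsimp only at hpe
    rw [dif_pos hj, dif_pos hk] at hpe
    have h5 : φ ⟨j, hj⟩ = φ ⟨k, hk⟩ := Subtype.ext hpe
    have h6 := φ.injective h5
    exact congrArg Subtype.val h6
  have hgu := gswap_unitary e hout hinj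
  have hgsum := gswap_sub_one_summable e hout
  have hΘsum := theta_summable e d hgu hgsum
  have htle := hbd _ hgu hgsum
  have hstar : star (1 + Kswap e G p) = 1 + Kswap e G p := by
    rw [star_add, star_one, star_Kswap]
  have hdiag : ∀ j ∈ G, (t (p j) - t j) ^ 2
      ≤ ‖((1 + Kswap e G p) * d * star (1 + Kswap e G p) - d) (e j)‖ ^ 2 := by
    intro j hj
    have hact : (1 + Kswap e G p) (e j) = e (p j) := by
      rw [ContinuousLinearMap.add_apply, ContinuousLinearMap.one_apply,
        Kswap_apply_basis_mem e hout hj]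
      abel
    have hent := diag_entry_of_swap_action e d hstar hact
    have him : (⟪e (p j), d (e (p j))⟫ - ⟪e j, d (e j)⟫).im = t (p j) - t j := by
      rw [Complex.sub_im]
    have hnorm : ‖⟪e j, ((1 + Kswap e G p) * d * star (1 + Kswap e G p) - d) (e j)⟫‖
        ≤ ‖((1 + Kswap e G p) * d * star (1 + Kswap e G p) - d) (e j)‖ := by
      have h1 : ‖e j‖ = 1 := e.orthonormal.1 j
      calc ‖⟪e j, ((1 + Kswap e G p) * d * star (1 + Kswap e G p) - d) (e j)⟫‖
          ≤ ‖e j‖ * ‖((1 + Kswap e G p) * d * star (1 + Kswap e G p) - d) (e j)‖ :=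
            norm_inner_le_norm _ _
        _ = ‖((1 + Kswap e G p) * d * star (1 + Kswap e G p) - d) (e j)‖ := by
            rw [h1, one_mul]
    have h2 : (t (p j) - t j) ^ 2
        ≤ ‖⟪e j, ((1 + Kswap e G p) * d * star (1 + Kswap e G p) - d) (e j)⟫‖ ^ 2 := by
      rw [hent, norm_sq_eq_re_im, him]
      nlinarith [sq_nonneg ((⟪e (p j), d (e (p j))⟫ - ⟪e j, d (e j)⟫).re)]
    exact le_trans h2 (pow_le_pow_left₀ (norm_nonneg _) hnorm 2)
  have hsum1 : ∑ j ∈ G, (t (p j) - t j) ^ 2 ≤ M :=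
    le_trans (Finset.sum_le_sum hdiag)
      (le_trans (Summable.sum_le_tsum G (fun _ _ => sq_nonneg _) hΘsum) htle)
  have hsum2 : ∑ j ∈ G, (t (p j) - c) ^ 2 ≤ 1 := by
    have hper : ∀ j ∈ G, (t (p j) - c) ^ 2 ≤ (1 / ((n:ℝ) + 1)) ^ 2 := by
      intro j hj
      have h1 := (hpA j hj).1
      have h2 := pow_le_pow_left₀ (abs_nonneg _) h1.le 2
      rwa [sq_abs] at h2
    calc ∑ j ∈ G, (t (p j) - c) ^ 2 ≤ ∑ _j ∈ G, (1 / ((n:ℝ) + 1)) ^ 2 :=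
          Finset.sum_le_sum hper
      _ = (n:ℝ) * (1 / ((n:ℝ) + 1)) ^ 2 := by rw [Finset.sum_const, nsmul_eq_mul, hn]
      _ ≤ 1 := by
          have hN : (0:ℝ) ≤ (n:ℝ) := Nat.cast_nonneg n
          have hpos : (0:ℝ) < ((n:ℝ) + 1) ^ 2 := pow_pos (by linarith) 2
          rw [div_pow, one_pow, mul_one_div, div_le_one hpos]
          nlinarith
  have hptw : ∀ j ∈ G, (t j - c) ^ 2 ≤ 2 * (t (p j) - t j) ^ 2 + 2 * (t (p j) - c) ^ 2 := by
    intro j _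
    nlinarith [sq_nonneg ((t j - t (p j)) - (t (p j) - c))]
  calc ∑ j ∈ G, (t j - c) ^ 2
      ≤ ∑ j ∈ G, (2 * (t (p j) - t j) ^ 2 + 2 * (t (p j) - c) ^ 2) :=
        Finset.sum_le_sum hptw
    _ = 2 * ∑ j ∈ G, (t (p j) - t j) ^ 2 + 2 * ∑ j ∈ G, (t (p j) - c) ^ 2 := by
        rw [Finset.sum_add_distrib, ← Finset.mul_sum, ← Finset.mul_sum]
    _ ≤ 2 * M + 2 := by linarith

/-! ### The hard direction -/

lemma hard_dir (d : H →L[ℂ] H) (hd : star d = -d) (M : ℝ)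
    (hbd : ∀ g : H →L[ℂ] H, g ∈ unitary (H →L[ℂ] H) →
      (Summable fun j => ‖(g - 1) (e j)‖ ^ 2) →
      (∑' j, ‖(g * d * star g - d) (e j)‖ ^ 2) ≤ M) :
    ∃ (c : ℝ) (b : H →L[ℂ] H), star b = -b ∧ (Summable fun j => ‖b (e j)‖ ^ 2) ∧
      d = ((c : ℂ) * Complex.I) • (1 : H →L[ℂ] H) + b := by
  classical
  cases finite_or_infinite J with
  | inl hfin =>
    exact ⟨0, d, hd, Summable.of_finite, by simp⟩
  | inr hinf =>
    obtain ⟨c, hcG⟩ := diag_bound e d M hbd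
    set b := d - ((c:ℂ) * Complex.I) • (1 : H →L[ℂ] H) with hb
    have hstarscal : star (((c:ℂ) * Complex.I) • (1 : H →L[ℂ] H))
        = -(((c:ℂ) * Complex.I) • (1 : H →L[ℂ] H)) := by
      rw [star_smul, star_one]
      have h1 : star ((c:ℂ) * Complex.I) = -((c:ℂ) * Complex.I) := by
        simp [Complex.ext_iff]
      rw [h1, neg_smul]
    refine ⟨c, b, ?_, ?_, by rw [hb]; abel⟩
    · rw [hb, star_sub, hd, hstarscal]
      abel
    · -- summability of b in the Hilbert–Schmidt sense
      have hbod : ∀ (i j : J), i ≠ j → ⟪e i, b (e j)⟫ = ⟪e i, d (e j)⟫ := by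
        intro i j hij
        rw [hb, ContinuousLinearMap.sub_apply, ContinuousLinearMap.smul_apply,
          ContinuousLinearMap.one_apply, inner_sub_right, inner_smul_right,
          inner_basis, if_neg hij, mul_zero, sub_zero]
      have hbdg : ∀ j : J, ‖⟪e j, b (e j)⟫‖ ^ 2 = ((⟪e j, d (e j)⟫).im - c) ^ 2 := by
        intro j
        have h1 : ⟪e j, b (e j)⟫ = ⟪e j, d (e j)⟫ - (c:ℂ) * Complex.I := by
          rw [hb, ContinuousLinearMap.sub_apply, ContinuousLinearMap.smul_apply,
            ContinuousLinearMap.one_apply, inner_sub_right, inner_smul_right,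
            inner_basis, if_pos rfl, mul_one]
        have hre : (⟪e j, d (e j)⟫).re = 0 := diag_purely_imag d hd (e j)
        rw [h1, norm_sq_eq_re_im, Complex.sub_re, Complex.sub_im, hre]
        simp [Complex.ext_iff]
      have hbound : ∀ u : Finset (J × J),
          ∑ p ∈ u, ‖⟪e p.2, b (e p.1)⟫‖ ^ 2 ≤ M / 2 + (2 * M + 2) := by
        intro u
        set F := u.image Prod.fst ∪ u.image Prod.snd with hF
        have hsub : u ⊆ F ×ˢ F := by
          intro p hp
          rw [Finset.mem_product]
          exact ⟨Finset.mem_union_left _ (Finset.mem_image_of_mem _ hp),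
            Finset.mem_union_right _ (Finset.mem_image_of_mem _ hp)⟩
        have h1 : ∑ p ∈ u, ‖⟪e p.2, b (e p.1)⟫‖ ^ 2
            ≤ ∑ p ∈ F ×ˢ F, ‖⟪e p.2, b (e p.1)⟫‖ ^ 2 :=
          Finset.sum_le_sum_of_subset_of_nonneg hsub (fun p _ _ => sq_nonneg _)
        have h2 : ∑ p ∈ (F ×ˢ F).filter (fun p => p.1 ≠ p.2), ‖⟪e p.2, b (e p.1)⟫‖ ^ 2
            + ∑ p ∈ (F ×ˢ F).filter (fun p => ¬ p.1 ≠ p.2), ‖⟪e p.2, b (e p.1)⟫‖ ^ 2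
            = ∑ p ∈ F ×ˢ F, ‖⟪e p.2, b (e p.1)⟫‖ ^ 2 :=
          Finset.sum_filter_add_sum_filter_not _ _ _
        have h3 : ∑ p ∈ (F ×ˢ F).filter (fun p => p.1 ≠ p.2), ‖⟪e p.2, b (e p.1)⟫‖ ^ 2
            ≤ M / 2 := by
          have heq : ∀ p ∈ (F ×ˢ F).filter (fun p => p.1 ≠ p.2),
              ‖⟪e p.2, b (e p.1)⟫‖ ^ 2 = ‖⟪e p.2, d (e p.1)⟫‖ ^ 2 := by
            intro p hp
            rw [Finset.mem_filter] at hp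
            rw [hbod p.2 p.1 (fun h => hp.2 h.symm)]
          rw [Finset.sum_congr rfl heq]
          exact offdiag_bound e d M hbd F
        have h4 : ∑ p ∈ (F ×ˢ F).filter (fun p => ¬ p.1 ≠ p.2), ‖⟪e p.2, b (e p.1)⟫‖ ^ 2
            ≤ 2 * M + 2 := by
          have hdiagset : (F ×ˢ F).filter (fun p => ¬ p.1 ≠ p.2)
              = F.image (fun j => (j, j)) := by
            ext ⟨a, a'⟩
            simp only [Finset.mem_filter, Finset.mem_product, Finset.mem_image, not_not,
              Prod.mk.injEq]
            constructor
            · rintro ⟨⟨ha1, _⟩, h3⟩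
              exact ⟨a, ha1, rfl, h3⟩
            · rintro ⟨x, hx, rfl, rfl⟩
              exact ⟨⟨hx, hx⟩, rfl⟩
          rw [hdiagset, Finset.sum_image (fun x _ y _ h => by simpa using h)]
          calc ∑ j ∈ F, ‖⟪e j, b (e j)⟫‖ ^ 2
              = ∑ j ∈ F, ((⟪e j, d (e j)⟫).im - c) ^ 2 :=
                Finset.sum_congr rfl fun j _ => hbdg j
            _ ≤ 2 * M + 2 := hcG F
        linarith
      have hm : Summable fun p : J × J => ‖⟪e p.2, b (e p.1)⟫‖ ^ 2 :=
        summable_of_sum_le (fun p => sq_nonneg _) hbound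
      have hkey := (summable_prod_of_nonneg
        (f := fun p : J × J => ‖⟪e p.2, b (e p.1)⟫‖ ^ 2) (fun p => sq_nonneg _)).1 hm
      have h5 := hkey.2
      dsimp only at h5
      refine h5.congr fun j => ?_
      exact pars_tsum e (b (e j))

/-! ### The easy direction -/

lemma easy_dir (b : H →L[ℂ] H) (c : ℝ) (hb : Summable fun j => ‖b (e j)‖ ^ 2)
    {g : H →L[ℂ] H} (hg : g ∈ unitary (H →L[ℂ] H)) :
    ∑' j, ‖(g * (((c:ℂ) * Complex.I) • 1 + b) * star g
        - (((c:ℂ) * Complex.I) • 1 + b)) (e j)‖ ^ 2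
      ≤ 4 * ∑' j, ‖b (e j)‖ ^ 2 := by
  have hgg : g * star g = 1 := (Unitary.mem_iff.1 hg).2
  have hθ : g * (((c:ℂ) * Complex.I) • 1 + b) * star g - (((c:ℂ) * Complex.I) • 1 + b)
      = g * b * star g - b := by
    have h1 : g * (((c:ℂ) * Complex.I) • (1:H →L[ℂ] H) + b) * star g
        = ((c:ℂ) * Complex.I) • (g * star g) + g * b * star g := by
      rw [mul_add, add_mul]
      rw [mul_smul_comm, mul_one, smul_mul_assoc]
    rw [h1, hgg]
    abel
  rw [hθ]
  have hgb : Summable fun j => ‖(g * b) (e j)‖ ^ 2 := hs_unit_left_summable e hg hb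
  have hX : Summable fun j => ‖(g * b * star g) (e j)‖ ^ 2 :=
    hs_unit_right_summable e (Unitary.star_mem hg) hgb
  have hΘ : Summable fun j => ‖(g * b * star g - b) (e j)‖ ^ 2 := hs_sub_summable e hX hb
  have hmaj : ∀ j, ‖(g * b * star g - b) (e j)‖ ^ 2
      ≤ 2 * ‖(g * b * star g) (e j)‖ ^ 2 + 2 * ‖b (e j)‖ ^ 2 := by
    intro j
    have h : ‖(g * b * star g - b) (e j)‖ ≤ ‖(g * b * star g) (e j)‖ + ‖b (e j)‖ := by
      rw [ContinuousLinearMap.sub_apply]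
      exact norm_sub_le _ _
    calc ‖(g * b * star g - b) (e j)‖ ^ 2
        ≤ (‖(g * b * star g) (e j)‖ + ‖b (e j)‖) ^ 2 :=
          pow_le_pow_left₀ (norm_nonneg _) h 2
      _ ≤ 2 * ‖(g * b * star g) (e j)‖ ^ 2 + 2 * ‖b (e j)‖ ^ 2 := by
          nlinarith [sq_nonneg (‖(g * b * star g) (e j)‖ - ‖b (e j)‖)]
  have hXt : ∑' j, ‖(g * b * star g) (e j)‖ ^ 2 = ∑' j, ‖b (e j)‖ ^ 2 := by
    rw [hs_unit_right_tsum e (Unitary.star_mem hg) hgb, hs_unit_left_tsum e hg b]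
  calc ∑' j, ‖(g * b * star g - b) (e j)‖ ^ 2
      ≤ ∑' j, (2 * ‖(g * b * star g) (e j)‖ ^ 2 + 2 * ‖b (e j)‖ ^ 2) :=
        Summable.tsum_le_tsum hmaj hΘ ((hX.mul_left 2).add (hb.mul_left 2))
    _ = 2 * ∑' j, ‖(g * b * star g) (e j)‖ ^ 2 + 2 * ∑' j, ‖b (e j)‖ ^ 2 := by
        rw [Summable.tsum_add (hX.mul_left 2) (hb.mul_left 2), tsum_mul_left, tsum_mul_left]
    _ = 4 * ∑' j, ‖b (e j)‖ ^ 2 := by rw [hXt]; ring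

end ops
end Stmt18Aux

/-- For `g = u₂(H)` and the cocycle `ω(x,y) = tr(d[x,y])` with `d ∈ u(H)`, the associated
group cocycle for the affine action of `G = U₂(H)` is `Θ_ω(g) = g d g⁻¹ − d` (under the
identification `g' ≅ g` by the trace pairing): it satisfies the `1`-cocycle identity, takes
values in `u₂(H)`, and has derivative `[x, d]` at the identity along `exp(t x)`; moreover
`Θ_ω` is bounded on `U₂(H)` if and only if `d ∈ ℝ i 1 + u₂(H)`. -/
theorem stmt_18 {H : Type} [NormedAddCommGroup H] [InnerProductSpace ℂ H] [CompleteSpace H]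
    {J : Type} (e : HilbertBasis J ℂ H)
    (d : H →L[ℂ] H) (hd : star d = -d) :
    -- the cocycle identity for `Θ(g) = g d g* − d`
    (∀ g h : H →L[ℂ] H, g ∈ unitary (H →L[ℂ] H) → h ∈ unitary (H →L[ℂ] H) →
        (g * h) * d * star (g * h) - d
          = g * (h * d * star h - d) * star g + (g * d * star g - d))
    -- `Θ` takes values in `u₂(H)`
    ∧ (∀ g : H →L[ℂ] H, g ∈ unitary (H →L[ℂ] H) →
        Summable (fun j => ‖(g - 1) (e j)‖ ^ 2) →
        (star (g * d * star g - d) = -(g * d * star g - d)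
          ∧ Summable (fun j => ‖(g * d * star g - d) (e j)‖ ^ 2)))
    -- derivative at the identity: `T_e(Θ)(x) = [x, d]`
    ∧ (∀ x : H →L[ℂ] H, star x = -x → Summable (fun j => ‖x (e j)‖ ^ 2) →
        HasDerivAt
          (fun t : ℝ =>
            NormedSpace.exp (t • x) * d * star (NormedSpace.exp (t • x)) - d)
          (x * d - d * x) 0)
    -- `Θ` is bounded (in the Hilbert–Schmidt norm) iff `d ∈ ℝ i 1 + u₂(H)`
    ∧ ((∃ M : ℝ, ∀ g : H →L[ℂ] H, g ∈ unitary (H →L[ℂ] H) →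
          Summable (fun j => ‖(g - 1) (e j)‖ ^ 2) →
          (∑' j, ‖(g * d * star g - d) (e j)‖ ^ 2) ≤ M)
        ↔ (∃ (c : ℝ) (b : H →L[ℂ] H), star b = -b ∧ Summable (fun j => ‖b (e j)‖ ^ 2) ∧
            d = ((c : ℂ) * Complex.I) • (1 : H →L[ℂ] H) + b)) := by
  refine ⟨?_, ?_, ?_, ?_⟩
  · intro g h _ _
    rw [star_mul]
    noncomm_ring
  · intro g hg hgs
    exact ⟨Stmt18Aux.theta_skew d hd g, Stmt18Aux.theta_summable e d hg hgs⟩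
  · intro x hx _
    exact Stmt18Aux.deriv_theta d x hx
  · constructor
    · rintro ⟨M, hbd⟩
      exact Stmt18Aux.hard_dir e d hd M hbd
    · rintro ⟨c, b, hbs, hb, hdeq⟩
      refine ⟨4 * ∑' j, ‖b (e j)‖ ^ 2, fun g hg hgs => ?_⟩
      rw [hdeq]
      exact Stmt18Aux.easy_dir e b c hb hg
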